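/- Let Λ be a continuous ℂ^{m×m}-valued function on the unit circle and define f*(Φ) = ∫ Σ_{k=1}^{r(θ)} (σ_k(Φ(e^{iθ})) − 1) dθ/2π, where r(θ) is the number of singular values of Φ(e^{iθ}) exceeding 1. If sup_θ σ_1(Λ(e^{iθ})) > 1, then sup_Φ ( ⟨Λ,Φ⟩ − f*(Φ) ) = +∞, where the supremum is over continuous matrix-valued Φ and ⟨Λ,Φ⟩ = ∫ Re tr(Λ(e^{iθ}) Φ(e^{iθ})*) dθ/2π. -/

import Mathlib

open Matrix Finset
open scoped ComplexOrder

/-- The shift operator Δ(e^{iθ}) = [I_m, e^{iθ}I_m, ..., e^{inθ}I_m]. -/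
noncomputable def Delta (m n : ℕ) (θ : ℝ) : Matrix (Fin m) (Fin (n+1) × Fin m) ℂ :=
  fun i p => Complex.exp (Complex.I * (p.1 : ℕ) * θ) * (if i = p.2 then 1 else 0)

/-- D_0(X) = Σ_h X_{hh} (sum of diagonal blocks). -/
def Dop0 {m n : ℕ} (X : Matrix (Fin (n+1) × Fin m) (Fin (n+1) × Fin m) ℝ) :
    Matrix (Fin m) (Fin m) ℝ :=
  fun a b => ∑ h : Fin (n+1), X (h, a) (h, b)

/-- D_j(X) = 2 Σ_h X_{h, h+j}, for j ≥ 1. -/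
def DopJ {m n : ℕ} (X : Matrix (Fin (n+1) × Fin m) (Fin (n+1) × Fin m) ℝ) (j : ℕ) :
    Matrix (Fin m) (Fin m) ℝ :=
  fun a b => 2 * ∑ h : Fin (n+1), ∑ k : Fin (n+1),
    if (k : ℕ) = (h : ℕ) + j then X (h, a) (k, b) else 0

/-- Symmetric block Toeplitz matrix with first block row Y. -/
def Tobl {m n : ℕ} (Y : Fin (n+1) → Matrix (Fin m) (Fin m) ℝ) :
    Matrix (Fin (n+1) × Fin m) (Fin (n+1) × Fin m) ℝ :=
  fun p q =>
    if (p.1 : ℕ) ≤ (q.1 : ℕ) then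
      Y ⟨(q.1 : ℕ) - (p.1 : ℕ), lt_of_le_of_lt (Nat.sub_le _ _) q.1.isLt⟩ p.2 q.2
    else
      Y ⟨(p.1 : ℕ) - (q.1 : ℕ), lt_of_le_of_lt (Nat.sub_le _ _) p.1.isLt⟩ q.2 p.2

/-- Singular values of a square complex matrix (unsorted): square roots of
the eigenvalues of AᴴA. -/
noncomputable def singularValues {m : ℕ} (A : Matrix (Fin m) (Fin m) ℂ) : Fin m → ℝ :=
  fun i => Real.sqrt ((Matrix.posSemidef_conjTranspose_mul_self A).1.eigenvalues i)

/-- The k-th largest singular value (k = 0 gives the largest). -/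
noncomputable def sdesc {m : ℕ} (A : Matrix (Fin m) (Fin m) ℂ) : Fin m → ℝ :=
  fun i => (singularValues A ∘ Tuple.sort (singularValues A)) i.rev

/-- Largest singular value (operator norm). -/
noncomputable def opNorm {m : ℕ} (A : Matrix (Fin m) (Fin m) ℂ) : ℝ :=
  ⨆ i, singularValues A i

/-- `f*(Φ) = (1/2π) ∫ Σ_{k=1}^{r(θ)} (σ_k(Φ(e^{iθ})) − 1) dθ`, where `r(θ)`
counts the singular values exceeding 1; equivalently the sum of positive parts. -/
noncomputable def fstar {m : ℕ} (Φ : ℝ → Matrix (Fin m) (Fin m) ℂ) : ℝ :=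
  (2 * Real.pi)⁻¹ * ∫ θ in (-Real.pi)..Real.pi,
    ∑ k : Fin m, max (sdesc (Φ θ) k - 1) 0

/- ### Auxiliary lemmas -/

lemma trace_eq_sum_eig' {n : Type*} [Fintype n] [DecidableEq n] {A : Matrix n n ℂ}
    (hA : A.IsHermitian) : A.trace = ∑ i, (hA.eigenvalues i : ℂ) := by
  exact hA.trace_eq_sum_eigenvalues

lemma eig_dichotomy' {m : ℕ} {H : Matrix (Fin m) (Fin m) ℂ} (hH : H.IsHermitian) (t : ℝ)
    (hHH : H * H = ((t : ℝ) : ℂ) • H) (i : Fin m) :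
    hH.eigenvalues i = 0 ∨ hH.eigenvalues i = t := by
  set v : Fin m → ℂ := (WithLp.equiv 2 _) (hH.eigenvectorBasis i) with hv
  have hv0 : v ≠ 0 := by
    have := hH.eigenvectorBasis.orthonormal.ne_zero i
    intro h
    exact this (by ext k; exact congrFun h k)
  have hveq : H *ᵥ v = (hH.eigenvalues i) • v := hH.mulVec_eigenvectorBasis i
  set μ := hH.eigenvalues i with hμ
  have h1 : (H * H) *ᵥ v = ((μ * μ : ℝ) : ℂ) • v := by
    rw [← Matrix.mulVec_mulVec, hveq, Matrix.mulVec_smul, hveq]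
    ext k
    simp [Complex.real_smul]
    rw [← mul_assoc]
  have h2 : (H * H) *ᵥ v = ((t * μ : ℝ) : ℂ) • v := by
    rw [hHH, Matrix.smul_mulVec, hveq]
    ext k
    simp [Complex.real_smul]
    rw [← mul_assoc]
  have h3 : (((μ * μ : ℝ) : ℂ) - ((t * μ : ℝ) : ℂ)) • v = 0 := by
    rw [sub_smul, ← h1, ← h2, sub_self]
  rcases smul_eq_zero.mp h3 with h | h
  · have hr : (μ * μ : ℝ) = t * μ := by exact_mod_cast sub_eq_zero.mp h
    rcases mul_eq_zero.mp (show (μ - t) * μ = 0 by linear_combination hr) with h' | h'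
    · exact Or.inr (by linarith [sub_eq_zero.mp h'])
    · exact Or.inl h'
  · exact absurd h hv0

lemma sum_sdesc' {m : ℕ} (A : Matrix (Fin m) (Fin m) ℂ) (F : ℝ → ℝ) :
    ∑ k : Fin m, F (sdesc A k) = ∑ k : Fin m, F (singularValues A k) :=
  Equiv.sum_comp (Fin.revPerm.trans (Tuple.sort (singularValues A)))
    (fun k => F (singularValues A k))

lemma vecMulVec_mul_vecMulVec' {m : ℕ} (a b c d : Fin m → ℂ) :
    vecMulVec a b * vecMulVec c d = (b ⬝ᵥ c) • vecMulVec a d := by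
  ext i j
  simp [Matrix.mul_apply, vecMulVec_apply, dotProduct, Finset.mul_sum, Finset.sum_mul]
  congr 1; ext k; ring

lemma conjT_vecMulVec' {m : ℕ} (u v : Fin m → ℂ) :
    (vecMulVec u (star v))ᴴ = vecMulVec v (star u) := by
  ext i j
  simp [conjTranspose_apply, vecMulVec_apply]
  ring

lemma mul_vecMulVec' {m : ℕ} (A : Matrix (Fin m) (Fin m) ℂ) (a b : Fin m → ℂ) :
    A * vecMulVec a b = vecMulVec (A *ᵥ a) b := by
  ext i j
  simp [Matrix.mul_apply, vecMulVec_apply, Matrix.mulVec, dotProduct, Finset.sum_mul]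
  congr 1; ext k; ring

lemma trace_vecMulVec' {m : ℕ} (a b : Fin m → ℂ) :
    (vecMulVec a b).trace = b ⬝ᵥ a := by
  rw [Matrix.trace, dotProduct]
  congr 1; ext i
  exact mul_comm _ _

lemma sum_sv_rank_one' {m : ℕ} (u v : Fin m → ℂ) (hu : star u ⬝ᵥ u = 1)
    (hv : star v ⬝ᵥ v = 1) (c : ℝ) (hc : 0 ≤ c) :
    ∑ k : Fin m, max (sdesc (((c : ℝ) : ℂ) • vecMulVec u (star v)) k - 1) 0
      = max (c - 1) 0 := by
  set Φ : Matrix (Fin m) (Fin m) ℂ := ((c : ℝ) : ℂ) • vecMulVec u (star v) with hΦ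
  rw [sum_sdesc' Φ (fun x => max (x - 1) 0)]
  set hPSD := Matrix.posSemidef_conjTranspose_mul_self Φ with hPSDdef
  set h := hPSD.1 with hdef
  have hH : Φᴴ * Φ = ((c ^ 2 : ℝ) : ℂ) • vecMulVec v (star v) := by
    rw [hΦ, conjTranspose_smul, conjT_vecMulVec', smul_mul_assoc, mul_smul_comm,
      vecMulVec_mul_vecMulVec', hu, one_smul, smul_smul, Complex.star_def,
      Complex.conj_ofReal, ← Complex.ofReal_mul, ← pow_two]
  have hH2 : (Φᴴ * Φ) * (Φᴴ * Φ) = ((c ^ 2 : ℝ) : ℂ) • (Φᴴ * Φ) := by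
    rw [hH, smul_mul_assoc, mul_smul_comm, vecMulVec_mul_vecMulVec', hv, one_smul]
  have hdich : ∀ k, h.eigenvalues k = 0 ∨ h.eigenvalues k = c ^ 2 :=
    eig_dichotomy' h _ hH2
  have hnn : ∀ k, 0 ≤ h.eigenvalues k := fun k => hPSD.eigenvalues_nonneg k
  have htrP : (vecMulVec v (star v)).trace = 1 := by
    rw [Matrix.trace]
    rw [show ∑ i, (vecMulVec v (star v)).diag i = ∑ i, v i * star (v i) from rfl]
    rw [← hv, dotProduct]
    congr 1; ext i
    simp [mul_comm]
  have htr : ∑ k, h.eigenvalues k = c ^ 2 := by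
    have h1 := trace_eq_sum_eig' h
    have h2 : (Φᴴ * Φ).trace = ((c ^ 2 : ℝ) : ℂ) := by
      rw [hH, trace_smul, htrP, smul_eq_mul, mul_one]
    exact_mod_cast (h2.symm.trans h1).symm
  rcases eq_or_lt_of_le hc with hc0 | hcpos
  · have hall : ∀ k, h.eigenvalues k = 0 := by
      intro k; rcases hdich k with h' | h'
      · exact h'
      · rw [h', ← hc0]; norm_num
    have hz : ∀ k : Fin m, max (singularValues Φ k - 1) 0 = 0 := by
      intro k
      show max (Real.sqrt (h.eigenvalues k) - 1) 0 = 0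
      rw [hall k, Real.sqrt_zero]
      norm_num
    rw [Finset.sum_congr rfl (fun k _ => hz k), Finset.sum_const, smul_zero, ← hc0]
    norm_num
  · have hc2 : (0:ℝ) < c ^ 2 := by positivity
    have hpt : ∀ k, max (singularValues Φ k - 1) 0
        = if h.eigenvalues k = c ^ 2 then max (c - 1) 0 else 0 := by
      intro k
      show max (Real.sqrt (h.eigenvalues k) - 1) 0 = _
      rcases hdich k with h' | h'
      · rw [h', if_neg (ne_of_lt hc2), Real.sqrt_zero]
        norm_num
      · rw [h', if_pos rfl, Real.sqrt_sq hc]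
    have hcard : (Finset.univ.filter (fun k => h.eigenvalues k = c ^ 2)).card = 1 := by
      have hsum : ∑ k, h.eigenvalues k
          = ((Finset.univ.filter (fun k => h.eigenvalues k = c ^ 2)).card : ℝ) * c ^ 2 := by
        rw [Finset.sum_congr rfl (fun k _ => show h.eigenvalues k
            = if h.eigenvalues k = c ^ 2 then c ^ 2 else (0:ℝ) by
          rcases hdich k with h' | h'
          · rw [h', if_neg (ne_of_lt hc2)]
          · rw [h', if_pos rfl]), Finset.sum_ite, Finset.sum_const, Finset.sum_const_zero,
          add_zero, nsmul_eq_mul]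
      rw [htr] at hsum
      have h2 := hsum.symm
      field_simp at h2
      exact_mod_cast h2
    rw [Finset.sum_congr rfl (fun k _ => hpt k), Finset.sum_ite, Finset.sum_const,
      Finset.sum_const_zero, add_zero, hcard, one_nsmul]

/-- if `sup_θ σ_1(Λ(e^{iθ})) > 1` for a continuous 2π-periodic
matrix function `Λ`, then `sup_Φ (⟨Λ,Φ⟩ − f*(Φ)) = +∞` over continuous `Φ`. -/
theorem stmt_15 (m : ℕ) (hm : 0 < m) (Λ : ℝ → Matrix (Fin m) (Fin m) ℂ)
    (hcont : ∀ p q : Fin m, Continuous fun θ => Λ θ p q)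
    (hper : ∀ θ : ℝ, Λ (θ + 2 * Real.pi) = Λ θ)
    (hsup : 1 < ⨆ θ : Set.Icc (-Real.pi) Real.pi, sdesc (Λ (θ : ℝ)) ⟨0, hm⟩) :
    (⨆ (Φ : ℝ → Matrix (Fin m) (Fin m) ℂ)
        (_ : ∀ p q : Fin m, Continuous fun θ => Φ θ p q),
        ((((2 * Real.pi)⁻¹
            * ∫ θ in (-Real.pi)..Real.pi, (Λ θ * (Φ θ)ᴴ).trace.re : ℝ)) : EReal)
          - ((fstar Φ : ℝ) : EReal)) = ⊤ := by
  have hπ := Real.pi_pos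
  have hne : Nonempty (Set.Icc (-Real.pi) Real.pi) :=
    ⟨⟨0, by constructor <;> linarith⟩⟩
  obtain ⟨⟨θb, hθmem⟩, hθ⟩ := exists_lt_of_lt_ciSup hsup
  set A := Λ θb with hAdef
  set j := Tuple.sort (singularValues A) (Fin.rev (⟨0, hm⟩ : Fin m)) with hjdef
  set h := (Matrix.posSemidef_conjTranspose_mul_self A).1 with hhdef
  set μ := h.eigenvalues j with hμdef
  set s := Real.sqrt μ with hsdef
  have hs : 1 < s := hθ
  have hμnn : 0 ≤ μ := (Matrix.posSemidef_conjTranspose_mul_self A).eigenvalues_nonneg j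
  have hsμ : s ^ 2 = μ := Real.sq_sqrt hμnn
  have hspos : 0 < s := lt_trans one_pos hs
  set v : Fin m → ℂ := (WithLp.equiv 2 _) (h.eigenvectorBasis j) with hvdef
  have hvunit : star v ⬝ᵥ v = 1 := by
    have h1 := (EuclideanSpace.inner_eq_star_dotProduct (𝕜 := ℂ)
      (h.eigenvectorBasis j) (h.eigenvectorBasis j)).symm
    change star (h.eigenvectorBasis j).ofLp ⬝ᵥ (h.eigenvectorBasis j).ofLp = 1
    rw [dotProduct_comm, h1, inner_self_eq_norm_sq_to_K, h.eigenvectorBasis.orthonormal.1 j]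
    norm_num
  have hveq : (Aᴴ * A) *ᵥ v = ((μ : ℝ) : ℂ) • v := by
    change (Aᴴ * A) *ᵥ (h.eigenvectorBasis j).ofLp = _
    rw [h.mulVec_eigenvectorBasis j]
    ext k
    simp [Complex.real_smul]
    rfl
  have hAv : star (A *ᵥ v) ⬝ᵥ (A *ᵥ v) = ((μ : ℝ) : ℂ) := by
    rw [Matrix.star_mulVec, Matrix.dotProduct_mulVec, Matrix.vecMul_vecMul,
      ← Matrix.dotProduct_mulVec, hveq, dotProduct_smul, hvunit, smul_eq_mul, mul_one]
  set u : Fin m → ℂ := ((s⁻¹ : ℝ) : ℂ) • (A *ᵥ v) with hudef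
  have hustar : star u = ((s⁻¹ : ℝ) : ℂ) • star (A *ᵥ v) := by
    rw [hudef, star_smul]
    congr 1
    rw [Complex.star_def]
    exact Complex.conj_ofReal _
  have huunit : star u ⬝ᵥ u = 1 := by
    rw [hustar, hudef, smul_dotProduct, dotProduct_smul, hAv, smul_eq_mul,
      smul_eq_mul, ← Complex.ofReal_mul, ← Complex.ofReal_mul]
    rw [show s⁻¹ * (s⁻¹ * μ) = 1 from by rw [← hsμ]; field_simp]
    norm_num
  have htru : star u ⬝ᵥ (A *ᵥ v) = ((s : ℝ) : ℂ) := by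
    rw [hustar, smul_dotProduct, hAv, smul_eq_mul, ← Complex.ofReal_mul]
    rw [show s⁻¹ * μ = s from by rw [← hsμ]; field_simp]
  set B := vecMulVec u (star v) with hBdef
  set ρ : ℝ → ℝ := fun θ => ((Λ θ * Bᴴ).trace).re with hρdef
  have hρcont : Continuous ρ := by
    have he : ρ = fun θ => ∑ i, ∑ k, ((Λ θ i k) * (Bᴴ k i)).re := by
      funext θ
      rw [hρdef]
      simp [Matrix.trace, Matrix.diag, Matrix.mul_apply, Complex.re_sum]
    rw [he]
    exact continuous_finset_sum _ (fun i _ => continuous_finset_sum _ (fun k _ =>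
      Complex.continuous_re.comp ((hcont i k).mul continuous_const)))
  have hρval : ρ θb = s := by
    rw [hρdef]
    simp only
    rw [hBdef, conjT_vecMulVec', ← hAdef, mul_vecMulVec', trace_vecMulVec', htru]
    exact Complex.ofReal_re s
  -- choose δ by continuity
  set ε := (s - 1) / 2 with hεdef
  have hεpos : 0 < ε := by rw [hεdef]; linarith
  obtain ⟨δ0, hδ0pos, hδ0⟩ := Metric.continuous_iff.mp hρcont θb ε hεpos
  set δ := min δ0 Real.pi with hδdef
  have hδpos : 0 < δ := lt_min hδ0pos hπ
  have hδπ : δ ≤ Real.pi := min_le_right _ _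
  have hδδ0 : δ ≤ δ0 := min_le_left _ _
  have hρbig : ∀ θ : ℝ, |θ - θb| < δ → 1 + ε < ρ θ := by
    intro θ hd
    have h1 := hδ0 θ (by rw [Real.dist_eq]; exact lt_of_lt_of_le hd hδδ0)
    rw [Real.dist_eq, hρval] at h1
    have h2 := abs_lt.mp h1
    rw [hεdef]
    rw [hεdef] at h2
    linarith [h2.1]
  -- main quantitative step
  have hmain : ∀ M : ℝ, ∃ Φ : ℝ → Matrix (Fin m) (Fin m) ℂ,
      (∀ p q : Fin m, Continuous fun θ => Φ θ p q) ∧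
      M < (2 * Real.pi)⁻¹
            * (∫ θ in (-Real.pi)..Real.pi, (Λ θ * (Φ θ)ᴴ).trace.re) - fstar Φ := by
    intro M
    set c := ((|M| + 1) * (2 * Real.pi) * 4) / (ε * δ) with hcdef
    have hc : 0 < c := by
      apply div_pos
      · positivity
      · exact mul_pos hεpos hδpos
    set t₀ := if 0 < θb then θb - δ/2 else θb + δ/2 with ht₀def
    have hIcc : -Real.pi ≤ t₀ - δ/2 ∧ t₀ + δ/2 ≤ Real.pi := by
      rw [ht₀def]
      obtain ⟨hl, hr⟩ := hθmem
      split_ifs with hh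
      · constructor <;> linarith
      · push_neg at hh
        constructor <;> linarith
    have ht0θ : |t₀ - θb| ≤ δ/2 := by
      rw [ht₀def]
      split_ifs with hh <;> rw [abs_le] <;> constructor <;> linarith
    set g : ℝ → ℝ := fun θ => c * max (1 - |θ - t₀| / (δ/2)) 0 with hgdef
    have hgnn : ∀ θ, 0 ≤ g θ := fun θ => mul_nonneg hc.le (le_max_right _ _)
    have hgcont : Continuous g := by
      apply continuous_const.mul
      exact (continuous_const.sub (((continuous_id.sub continuous_const).abs).div_const
        _)).max continuous_const
    have hgsupp : ∀ θ : ℝ, g θ ≠ 0 → |θ - θb| < δ := by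
      intro θ hg
      have h1 : 0 < 1 - |θ - t₀| / (δ/2) := by
        by_contra hcon
        push_neg at hcon
        exact hg (by rw [hgdef]; simp only; rw [max_eq_right hcon, mul_zero])
      have h2 : |θ - t₀| < δ/2 :=
        (div_lt_one (half_pos hδpos)).mp (by linarith)
      calc |θ - θb| ≤ |θ - t₀| + |t₀ - θb| := abs_sub_le θ t₀ θb
        _ < δ/2 + δ/2 := by linarith [ht0θ]
        _ = δ := by ring
    have hghalf : ∀ θ : ℝ, |θ - t₀| ≤ δ/4 → c/2 ≤ g θ := by
      intro θ hd
      have h1 : |θ - t₀| / (δ/2) ≤ 1/2 := by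
        rw [div_le_iff₀ (half_pos hδpos)]
        linarith
      have h2 : (1:ℝ)/2 ≤ max (1 - |θ - t₀| / (δ/2)) 0 :=
        le_max_of_le_left (by linarith)
      calc c/2 = c * (1/2) := by ring
        _ ≤ c * max (1 - |θ - t₀| / (δ/2)) 0 := mul_le_mul_of_nonneg_left h2 hc.le
    set Φ : ℝ → Matrix (Fin m) (Fin m) ℂ := fun θ => ((g θ : ℝ) : ℂ) • B with hΦdef
    have hΦc : ∀ p q : Fin m, Continuous fun θ => Φ θ p q := by
      intro p q
      have he : (fun θ => Φ θ p q) = fun θ => ((g θ : ℝ) : ℂ) * B p q := rfl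
      rw [he]
      exact (Complex.continuous_ofReal.comp hgcont).mul continuous_const
    have hfs : ∀ θ : ℝ, (∑ k : Fin m, max (sdesc (Φ θ) k - 1) 0) = max (g θ - 1) 0 :=
      fun θ => sum_sv_rank_one' u v huunit hvunit (g θ) (hgnn θ)
    have hgain : ∀ θ : ℝ, (Λ θ * (Φ θ)ᴴ).trace.re = g θ * ρ θ := by
      intro θ
      have he : (Φ θ)ᴴ = ((g θ : ℝ) : ℂ) • Bᴴ := by
        rw [hΦdef]
        simp only
        rw [conjTranspose_smul]
        congr 1
        rw [Complex.star_def]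
        exact Complex.conj_ofReal _
      rw [he, mul_smul_comm, trace_smul, smul_eq_mul]
      simp [Complex.mul_re]
      left; rfl
    have key : ∀ θ : ℝ, ε * g θ ≤ g θ * ρ θ - max (g θ - 1) 0 := by
      intro θ
      rcases eq_or_lt_of_le (hgnn θ) with h0 | h0
      · rw [← h0]
        norm_num
      · have hρθ := hρbig θ (hgsupp θ (ne_of_gt h0))
        have hmx : max (g θ - 1) 0 ≤ g θ := max_le (by linarith) h0.le
        nlinarith
    -- integral estimates
    have hI2cont : Continuous fun θ => max (g θ - 1) 0 :=
      (hgcont.sub continuous_const).max continuous_const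
    have hI1int : IntervalIntegrable (fun θ => g θ * ρ θ) MeasureTheory.volume
        (-Real.pi) Real.pi := (hgcont.mul hρcont).intervalIntegrable _ _
    have hI2int : IntervalIntegrable (fun θ => max (g θ - 1) 0) MeasureTheory.volume
        (-Real.pi) Real.pi := hI2cont.intervalIntegrable _ _
    set I1 := ∫ θ in (-Real.pi)..Real.pi, g θ * ρ θ with hI1def
    set I2 := ∫ θ in (-Real.pi)..Real.pi, max (g θ - 1) 0 with hI2def
    set Ig := ∫ θ in (-Real.pi)..Real.pi, g θ with hIgdef
    have hsub : I1 - I2 = ∫ θ in (-Real.pi)..Real.pi, (g θ * ρ θ - max (g θ - 1) 0) :=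
      (intervalIntegral.integral_sub hI1int hI2int).symm
    have hmono : (∫ θ in (-Real.pi)..Real.pi, ε * g θ)
        ≤ ∫ θ in (-Real.pi)..Real.pi, (g θ * ρ θ - max (g θ - 1) 0) := by
      apply intervalIntegral.integral_mono_on (by linarith)
        ((continuous_const.mul hgcont).intervalIntegrable _ _)
        (((hgcont.mul hρcont).sub hI2cont).intervalIntegrable _ _)
      exact fun x _ => key x
    have hconstmul : (∫ θ in (-Real.pi)..Real.pi, ε * g θ) = ε * Ig :=
      intervalIntegral.integral_const_mul ε g
    have hIg : c * δ / 4 ≤ Ig := by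
      set a := t₀ - δ/4 with hadef
      set b := t₀ + δ/4 with hbdef
      have hab : a ≤ b := by rw [hadef, hbdef]; linarith
      have h1 : -Real.pi ≤ a := by rw [hadef]; linarith [hIcc.1]
      have h2 : b ≤ Real.pi := by rw [hbdef]; linarith [hIcc.2]
      have hsplit1 : (∫ θ in (-Real.pi)..a, g θ) + (∫ θ in a..Real.pi, g θ) = Ig :=
        intervalIntegral.integral_add_adjacent_intervals
          (hgcont.intervalIntegrable _ _) (hgcont.intervalIntegrable _ _)
      have hsplit2 : (∫ θ in a..b, g θ) + (∫ θ in b..Real.pi, g θ)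
          = ∫ θ in a..Real.pi, g θ :=
        intervalIntegral.integral_add_adjacent_intervals
          (hgcont.intervalIntegrable _ _) (hgcont.intervalIntegrable _ _)
      have hp1 : 0 ≤ ∫ θ in (-Real.pi)..a, g θ :=
        intervalIntegral.integral_nonneg h1 (fun x _ => hgnn x)
      have hp3 : 0 ≤ ∫ θ in b..Real.pi, g θ :=
        intervalIntegral.integral_nonneg h2 (fun x _ => hgnn x)
      have hmid : c * δ / 4 ≤ ∫ θ in a..b, g θ := by
        have hconst : (∫ _ in a..b, (c/2 : ℝ)) ≤ ∫ θ in a..b, g θ := by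
          apply intervalIntegral.integral_mono_on hab intervalIntegrable_const
            (hgcont.intervalIntegrable _ _)
          intro x hx
          apply hghalf
          rw [abs_le]
          obtain ⟨hx1, hx2⟩ := hx
          constructor <;> [skip; skip] <;> [rw [hadef] at hx1; rw [hbdef] at hx2] <;> linarith
        rw [intervalIntegral.integral_const, smul_eq_mul] at hconst
        have hba : b - a = δ/2 := by rw [hadef, hbdef]; ring
        rw [hba] at hconst
        linarith
      linarith
    -- put it together
    refine ⟨Φ, hΦc, ?_⟩
    have hεδ : ε * δ ≠ 0 := ne_of_gt (mul_pos hεpos hδpos)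
    have hval : (2 * Real.pi)⁻¹ * (ε * (c * δ / 4)) = |M| + 1 := by
      rw [hcdef]
      field_simp
    have hgainint : (∫ θ in (-Real.pi)..Real.pi, (Λ θ * (Φ θ)ᴴ).trace.re) = I1 := by
      rw [hI1def]
      congr 1
      funext θ
      exact hgain θ
    have hfsint : fstar Φ = (2 * Real.pi)⁻¹ * I2 := by
      rw [fstar, hI2def]
      congr 2
      funext θ
      exact hfs θ
    rw [hgainint, hfsint]
    have h2πpos : (0:ℝ) < (2 * Real.pi)⁻¹ := by positivity
    have hchain : ε * (c * δ / 4) ≤ I1 - I2 := by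
      have e1 : ε * (c * δ / 4) ≤ ε * Ig := by
        apply mul_le_mul_of_nonneg_left _ hεpos.le
        linarith
      rw [hsub]
      calc ε * (c * δ / 4) ≤ ε * Ig := e1
        _ = ∫ θ in (-Real.pi)..Real.pi, ε * g θ := hconstmul.symm
        _ ≤ _ := hmono
    calc M ≤ |M| := le_abs_self M
      _ < |M| + 1 := by linarith
      _ = (2 * Real.pi)⁻¹ * (ε * (c * δ / 4)) := hval.symm
      _ ≤ (2 * Real.pi)⁻¹ * (I1 - I2) := mul_le_mul_of_nonneg_left hchain h2πpos.le
      _ = (2 * Real.pi)⁻¹ * I1 - (2 * Real.pi)⁻¹ * I2 := by ring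
  -- EReal wrap-up
  rw [iSup_eq_top]
  intro b hb
  obtain ⟨M, hbM⟩ : ∃ M : ℝ, b < (M : EReal) := by
    induction b using EReal.rec with
    | bot => exact ⟨0, EReal.bot_lt_coe 0⟩
    | coe x => exact ⟨x + 1, by exact_mod_cast lt_add_one x⟩
    | top => exact absurd hb (lt_irrefl ⊤)
  obtain ⟨Φ, hΦc, hΦval⟩ := hmain M
  refine ⟨Φ, ?_⟩
  rw [iSup_pos hΦc]
  rw [← EReal.coe_sub]
  calc b < (M : EReal) := hbM
    _ < _ := by exact_mod_cast hΦval
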